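/- Geometric lemma: Let x ∈ S_{d−1}, θ ∈ (0, π/2), and let A ⊆ C_θ(x) be measurable with s(A) > 0. If u is a uniformly random point of A, then E[s(C_θ(u) ∩ A)] ≤ 2 · s_d(q(θ)), where q(θ) = arcsin( sqrt((cos θ − 1)²(1 + 2 cos θ)) / sin θ ). -/

import Mathlib

open Real MeasureTheory

noncomputable def q_fn (θ : ℝ) : ℝ :=
  arcsin (Real.sqrt ((Real.cos θ - 1) ^ 2 * (1 + 2 * Real.cos θ)) / Real.sin θ)

lemma aux_nlin {c a b g : ℝ} (hc0 : 0 < c) (hca : c ≤ a) (hab : a ≤ b) (hcg : c ≤ g) :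
    2*c^2*(2+2*a) ≤ (b+g)^2*(1+c) := by
  nlinarith [mul_self_le_mul_self (by linarith : (0:ℝ) ≤ a+c) (by linarith : a+c ≤ b+g),
    mul_nonneg (sub_nonneg.2 hca) (by linarith : (0:ℝ) ≤ a+3*c),
    mul_nonneg hc0.le (sq_nonneg (a-c))]

lemma aux_branch {E : Type*} [NormedAddCommGroup E] [InnerProductSpace ℝ E]
    {c : ℝ} (hc0 : 0 < c) (x u y : E) (hxn : ‖x‖ = 1) (hun : ‖u‖ = 1)
    (hxu : c ≤ (inner ℝ x u : ℝ)) (hxy : c ≤ (inner ℝ x y : ℝ)) (huy : c ≤ (inner ℝ u y : ℝ))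
    (hab : (inner ℝ x u : ℝ) ≤ (inner ℝ x y : ℝ)) :
    Real.sqrt (2*c^2/(1+c)) ≤ (inner ℝ (‖x+u‖⁻¹ • (x+u)) y : ℝ) := by
  set a := (inner ℝ x u : ℝ) with ha
  set b := (inner ℝ x y : ℝ) with hb
  set g := (inner ℝ u y : ℝ) with hg
  have hns : ‖x+u‖^2 = 2+2*a := by
    rw [@norm_add_sq_real, hxn, hun]; ring
  have hpos : (0:ℝ) < 2+2*a := by nlinarith
  have hxune : ‖x+u‖ = Real.sqrt (2+2*a) := by
    rw [← hns, Real.sqrt_sq (norm_nonneg _)]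
  have hip : (inner ℝ (‖x+u‖⁻¹ • (x+u)) y : ℝ) = (b+g)/Real.sqrt (2+2*a) := by
    rw [real_inner_smul_left, inner_add_left, hxune, ← hb, ← hg]
    rw [div_eq_inv_mul]
  rw [hip]
  have hbg : (0:ℝ) ≤ b + g := by linarith
  have h1 : 2*c^2/(1+c) ≤ (b+g)^2/(2+2*a) := by
    rw [div_le_div_iff₀ (by linarith) hpos]
    exact aux_nlin hc0 hxu hab huy
  calc Real.sqrt (2*c^2/(1+c)) ≤ Real.sqrt ((b+g)^2/(2+2*a)) := Real.sqrt_le_sqrt h1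
    _ = (b+g)/Real.sqrt (2+2*a) := by
        rw [Real.sqrt_div (sq_nonneg _), Real.sqrt_sq hbg]

lemma aux_key {E : Type*} [NormedAddCommGroup E] [InnerProductSpace ℝ E]
    {c : ℝ} (hc0 : 0 < c) (x u y : E) (hxn : ‖x‖ = 1) (hun : ‖u‖ = 1) (hyn : ‖y‖ = 1)
    (hxu : c ≤ (inner ℝ x u : ℝ)) (hxy : c ≤ (inner ℝ x y : ℝ)) (huy : c ≤ (inner ℝ u y : ℝ)) :
    Real.sqrt (2*c^2/(1+c)) ≤ (inner ℝ (‖x+u‖⁻¹ • (x+u)) y : ℝ) ∨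
      Real.sqrt (2*c^2/(1+c)) ≤ (inner ℝ (‖x+y‖⁻¹ • (x+y)) u : ℝ) := by
  rcases le_total (inner ℝ x u : ℝ) (inner ℝ x y : ℝ) with h | h
  · exact Or.inl (aux_branch hc0 x u y hxn hun hxu hxy huy h)
  · exact Or.inr (aux_branch hc0 x y u hxn hyn hxy hxu (by rwa [real_inner_comm]) h)

lemma cos_q_fn {θ : ℝ} (h0 : 0 < θ) (h2 : θ < π/2) :
    Real.cos (q_fn θ) = Real.sqrt (2 * Real.cos θ ^ 2 / (1 + Real.cos θ)) := by
  have hc0 : 0 < Real.cos θ := Real.cos_pos_of_mem_Ioo ⟨by linarith [Real.pi_pos], h2⟩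
  have hc1 : Real.cos θ < 1 := by
    have := Real.cos_lt_cos_of_nonneg_of_le_pi le_rfl (by linarith [Real.pi_pos]) h0
    simpa using this
  have hs : 0 < Real.sin θ := Real.sin_pos_of_pos_of_lt_pi h0 (by linarith [Real.pi_pos])
  rw [q_fn, Real.cos_arcsin]
  congr 1
  rw [div_pow, Real.sq_sqrt (by nlinarith : (0:ℝ) ≤ (Real.cos θ - 1)^2 * (1 + 2*Real.cos θ))]
  have hs2 : Real.sin θ ^ 2 = 1 - Real.cos θ ^ 2 := Real.sin_sq θ
  rw [hs2]
  have h1 : (1:ℝ) - Real.cos θ ^ 2 ≠ 0 := by nlinarith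
  have h2' : (1:ℝ) + Real.cos θ ≠ 0 := by nlinarith
  field_simp
  ring

/-- Geometric lemma: if `A` is a measurable subset of positive measure of the
cap `C_θ(x)` on the unit sphere `S ⊆ ℝ^d` (with normalized surface measure `μ`),
and `u` is a uniformly random point of `A`, then
`E[s(C_θ(u) ∩ A)] ≤ 2 · s_d(q(θ))`. -/
theorem expected_cap_intersection_le (d : ℕ) (hd : 3 ≤ d) (θ sdq : ℝ)
    (hθ : θ ∈ Set.Ioo 0 (π / 2))
    (μ : Measure (EuclideanSpace ℝ (Fin d)))
    (S : Set (EuclideanSpace ℝ (Fin d))) (hS : S = Metric.sphere 0 1)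
    (hprob : μ S = 1)
    (hcapq : ∀ z ∈ S, μ {y ∈ S | (inner ℝ z y : ℝ) ≥ Real.cos (q_fn θ)} = ENNReal.ofReal sdq)
    (x : EuclideanSpace ℝ (Fin d)) (hx : x ∈ S)
    (A : Set (EuclideanSpace ℝ (Fin d))) (hA : MeasurableSet A)
    (hAsub : A ⊆ {y ∈ S | (inner ℝ x y : ℝ) ≥ Real.cos θ})
    (hApos : 0 < μ A) :
    (1 / (μ A).toReal) *
        ∫ u, (μ ({y ∈ S | (inner ℝ u y : ℝ) ≥ Real.cos θ} ∩ A)).toReal ∂(μ.restrict A) ≤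
      2 * sdq := by
  obtain ⟨hθ0, hθ2⟩ := hθ
  have hc0 : 0 < Real.cos θ := Real.cos_pos_of_mem_Ioo ⟨by linarith [Real.pi_pos], hθ2⟩
  have hc1 : Real.cos θ < 1 := by
    have := Real.cos_lt_cos_of_nonneg_of_le_pi le_rfl (by linarith [Real.pi_pos]) hθ0
    simpa using this
  have hcosq := cos_q_fn hθ0 hθ2
  have hqlt1 : Real.cos (q_fn θ) < 1 := by
    rw [hcosq, Real.sqrt_lt' one_pos, one_pow, div_lt_one (by linarith)]
    nlinarith
  -- norms of members of S
  have hnormS : ∀ v ∈ S, ‖v‖ = 1 := by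
    intro v hv
    rw [hS, mem_sphere_zero_iff_norm] at hv
    exact hv
  have hSm : MeasurableSet S := by
    rw [hS]; exact Metric.isClosed_sphere.measurableSet
  have hxn : ‖x‖ = 1 := hnormS x hx
  have hA_S : A ⊆ S := fun y hy => (hAsub hy).1
  have hμA1 : μ A ≤ 1 := hprob ▸ measure_mono hA_S
  have hμAtop : μ A ≠ ⊤ := (lt_of_le_of_lt hμA1 ENNReal.one_lt_top).ne
  -- sdq is nonnegative (else all q-caps are null, contradicting compact covering of S)
  have hsdq : 0 ≤ sdq := by
    by_contra hneg
    push_neg at hneg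
    have hzero : ∀ z ∈ S, μ {y ∈ S | (inner ℝ z y : ℝ) ≥ Real.cos (q_fn θ)} = 0 := by
      intro z hz
      rw [hcapq z hz, ENNReal.ofReal_eq_zero.2 hneg.le]
    have hScomp : IsCompact S := by rw [hS]; exact isCompact_sphere 0 1
    have hUopen : ∀ z : S, IsOpen {y : EuclideanSpace ℝ (Fin d) |
        Real.cos (q_fn θ) < (inner ℝ (z : EuclideanSpace ℝ (Fin d)) y : ℝ)} := by
      intro z
      exact isOpen_lt continuous_const (Continuous.inner continuous_const continuous_id)
    have hcover : S ⊆ ⋃ z : S, {y : EuclideanSpace ℝ (Fin d) |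
        Real.cos (q_fn θ) < (inner ℝ (z : EuclideanSpace ℝ (Fin d)) y : ℝ)} := by
      intro y hy
      refine Set.mem_iUnion.2 ⟨⟨y, hy⟩, ?_⟩
      have h1 : (inner ℝ y y : ℝ) = 1 := by
        rw [real_inner_self_eq_norm_sq, hnormS y hy]; norm_num
      have : Real.cos (q_fn θ) < (inner ℝ y y : ℝ) := by rw [h1]; exact hqlt1
      exact this
    obtain ⟨t, ht⟩ := hScomp.elim_finite_subcover _ hUopen hcover
    have h1le : (1 : ENNReal) ≤ 0 := by
      calc (1 : ENNReal) = μ S := hprob.symm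
        _ ≤ μ (⋃ z ∈ t, {y : EuclideanSpace ℝ (Fin d) |
              Real.cos (q_fn θ) < (inner ℝ (z : EuclideanSpace ℝ (Fin d)) y : ℝ)} ∩ S) := by
            apply measure_mono
            intro y hy
            obtain ⟨z, hzt, hzU⟩ := Set.mem_iUnion₂.1 (ht hy)
            exact Set.mem_iUnion₂.2 ⟨z, hzt, hzU, hy⟩
        _ ≤ ∑ z ∈ t, μ ({y : EuclideanSpace ℝ (Fin d) |
              Real.cos (q_fn θ) < (inner ℝ (z : EuclideanSpace ℝ (Fin d)) y : ℝ)} ∩ S) :=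
            measure_biUnion_finset_le t _
        _ = 0 := by
            apply Finset.sum_eq_zero
            intro z _
            refine le_antisymm (le_of_le_of_eq (measure_mono ?_) (hzero z z.2)) zero_le
            rintro y ⟨h1, h2⟩
            exact ⟨h2, le_of_lt h1⟩
    simp at h1le
  -- the midpoint map
  set m := fun v : EuclideanSpace ℝ (Fin d) => ‖x + v‖⁻¹ • (x + v) with hm
  have hmS : ∀ v ∈ A, m v ∈ S := by
    intro v hv
    have hvn : ‖v‖ = 1 := hnormS v (hA_S hv)
    have hiv : Real.cos θ ≤ (inner ℝ x v : ℝ) := (hAsub hv).2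
    have hns : ‖x + v‖ ^ 2 = 2 + 2 * (inner ℝ x v : ℝ) := by
      rw [@norm_add_sq_real, hxn, hvn]; ring
    have hne : x + v ≠ 0 := by
      intro h
      rw [h] at hns
      simp only [norm_zero] at hns
      nlinarith
    rw [hS, mem_sphere_zero_iff_norm, hm]
    rw [norm_smul, norm_inv, norm_norm]
    exact inv_mul_cancel₀ (norm_ne_zero_iff.2 hne)
  set κ := Real.cos (q_fn θ) with hκ
  have hkey : ∀ u ∈ A, ∀ y ∈ A, Real.cos θ ≤ (inner ℝ u y : ℝ) →
      κ ≤ (inner ℝ (m u) y : ℝ) ∨ κ ≤ (inner ℝ (m y) u : ℝ) := by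
    intro u hu y hy huy
    rw [hcosq]
    exact aux_key hc0 x u y hxn (hnormS u (hA_S hu)) (hnormS y (hA_S hy))
      (hAsub hu).2 (hAsub hy).2 huy
  -- measure setup
  set ν := μ.restrict A with hν
  haveI : IsFiniteMeasure ν := ⟨by
    rw [hν, Measure.restrict_apply_univ]
    exact lt_of_le_of_lt hμA1 ENNReal.one_lt_top⟩
  set Wθ : Set ((EuclideanSpace ℝ (Fin d)) × (EuclideanSpace ℝ (Fin d))) :=
    {p | p.2 ∈ S ∧ Real.cos θ ≤ (inner ℝ p.1 p.2 : ℝ)} with hWθ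
  have hinnerp : Measurable fun p : (EuclideanSpace ℝ (Fin d)) × (EuclideanSpace ℝ (Fin d)) =>
      (inner ℝ p.1 p.2 : ℝ) := Measurable.inner measurable_fst measurable_snd
  have hWθm : MeasurableSet Wθ :=
    (hSm.preimage measurable_snd).inter (measurableSet_le measurable_const hinnerp)
  have hf_eq : ∀ u : EuclideanSpace ℝ (Fin d),
      μ ({y ∈ S | (inner ℝ u y : ℝ) ≥ Real.cos θ} ∩ A) = ν (Prod.mk u ⁻¹' Wθ) :=
    fun u => (Measure.restrict_apply' hA).symm
  have hf_meas : Measurable fun u => ν (Prod.mk u ⁻¹' Wθ) :=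
    measurable_measure_prodMk_left hWθm
  -- pointwise bound
  have hpt : ∀ u ∈ A, ν (Prod.mk u ⁻¹' Wθ) ≤
      ENNReal.ofReal sdq + ν {y | κ ≤ (inner ℝ (m y) u : ℝ)} := by
    intro u hu
    rw [hν, Measure.restrict_apply' hA, Measure.restrict_apply' hA]
    calc μ (Prod.mk u ⁻¹' Wθ ∩ A)
        ≤ μ (({y | κ ≤ (inner ℝ (m u) y : ℝ)} ∩ A) ∪ ({y | κ ≤ (inner ℝ (m y) u : ℝ)} ∩ A)) := by
          apply measure_mono
          rintro y ⟨⟨hyS, hyθ⟩, hyA⟩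
          rcases hkey u hu y hyA hyθ with h | h
          · exact Or.inl ⟨h, hyA⟩
          · exact Or.inr ⟨h, hyA⟩
      _ ≤ μ ({y | κ ≤ (inner ℝ (m u) y : ℝ)} ∩ A) + μ ({y | κ ≤ (inner ℝ (m y) u : ℝ)} ∩ A) :=
          measure_union_le _ _
      _ ≤ ENNReal.ofReal sdq + μ ({y | κ ≤ (inner ℝ (m y) u : ℝ)} ∩ A) := by
          apply add_le_add_left
          refine le_of_le_of_eq (measure_mono ?_) (hcapq (m u) (hmS u hu))
          rintro y ⟨h1, h2⟩
          exact ⟨hA_S h2, h1⟩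
  -- bound the double integral
  have hL : ∫⁻ u, ν (Prod.mk u ⁻¹' Wθ) ∂ν ≤ 2 * ENNReal.ofReal sdq * μ A := by
    have step1 : ∫⁻ u, ν (Prod.mk u ⁻¹' Wθ) ∂ν ≤
        ∫⁻ u, (ENNReal.ofReal sdq + ν {y | κ ≤ (inner ℝ (m y) u : ℝ)}) ∂ν := by
      apply lintegral_mono_ae
      filter_upwards [ae_restrict_mem hA] with u hu using hpt u hu
    have step2 : ∫⁻ u, (ENNReal.ofReal sdq + ν {y | κ ≤ (inner ℝ (m y) u : ℝ)}) ∂ν =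
        ENNReal.ofReal sdq * μ A + ∫⁻ u, ν {y | κ ≤ (inner ℝ (m y) u : ℝ)} ∂ν := by
      rw [lintegral_add_left measurable_const, lintegral_const]
      congr 1
      rw [hν, Measure.restrict_apply_univ]
    set W2 : Set ((EuclideanSpace ℝ (Fin d)) × (EuclideanSpace ℝ (Fin d))) :=
      {p | κ ≤ (inner ℝ (m p.2) p.1 : ℝ)} with hW2
    have hW2m : MeasurableSet W2 := by
      have heq : (fun p : (EuclideanSpace ℝ (Fin d)) × (EuclideanSpace ℝ (Fin d)) =>
          (inner ℝ (m p.2) p.1 : ℝ)) =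
          fun p => ‖x + p.2‖⁻¹ * (inner ℝ (x + p.2) p.1 : ℝ) :=
        funext fun p => real_inner_smul_left _ _ _
      have hmeas : Measurable fun p : (EuclideanSpace ℝ (Fin d)) × (EuclideanSpace ℝ (Fin d)) =>
          (inner ℝ (m p.2) p.1 : ℝ) := by
        rw [heq]
        exact (((measurable_const.add measurable_snd).norm).inv).mul
          (Measurable.inner (measurable_const.add measurable_snd) measurable_fst)
      exact measurableSet_le measurable_const hmeas
    have hsec1 : ∀ u, ν {y | κ ≤ (inner ℝ (m y) u : ℝ)} =
        ∫⁻ y, W2.indicator (fun _ => 1) (u, y) ∂ν := by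
      intro u
      rw [show (fun y => W2.indicator (fun _ => (1 : ENNReal)) (u, y)) =
        (Prod.mk u ⁻¹' W2).indicator (fun _ => 1) from rfl]
      rw [lintegral_indicator (measurable_prodMk_left hW2m), setLIntegral_one]
      rfl
    have hswap : ∫⁻ u, ∫⁻ y, W2.indicator (fun _ => 1) (u, y) ∂ν ∂ν =
        ∫⁻ y, ∫⁻ u, W2.indicator (fun _ => 1) (u, y) ∂ν ∂ν := by
      apply lintegral_lintegral_swap
      exact (measurable_const.indicator hW2m).aemeasurable
    have hsec2 : ∀ y ∈ A, ∫⁻ u, W2.indicator (fun _ => 1) (u, y) ∂ν ≤ ENNReal.ofReal sdq := by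
      intro y hy
      rw [show (fun u => W2.indicator (fun _ => (1 : ENNReal)) (u, y)) =
        ((fun u => (u, y)) ⁻¹' W2).indicator (fun _ => 1) from rfl]
      rw [lintegral_indicator (hW2m.preimage measurable_prodMk_right)]
      simp only [MeasureTheory.lintegral_const, one_mul, Measure.restrict_apply MeasurableSet.univ,
        Set.univ_inter]
      rw [hν, Measure.restrict_apply' hA]
      refine le_of_le_of_eq (measure_mono ?_) (hcapq (m y) (hmS y hy))
      rintro u ⟨h1, h2⟩
      exact ⟨hA_S h2, h1⟩
    have step3 : ∫⁻ u, ν {y | κ ≤ (inner ℝ (m y) u : ℝ)} ∂ν ≤ ENNReal.ofReal sdq * μ A := by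
      calc ∫⁻ u, ν {y | κ ≤ (inner ℝ (m y) u : ℝ)} ∂ν
          = ∫⁻ y, ∫⁻ u, W2.indicator (fun _ => 1) (u, y) ∂ν ∂ν := by
            rw [← hswap]; exact lintegral_congr hsec1
        _ ≤ ∫⁻ _, ENNReal.ofReal sdq ∂ν := by
            apply lintegral_mono_ae
            filter_upwards [ae_restrict_mem hA] with y hy using hsec2 y hy
        _ = ENNReal.ofReal sdq * μ A := by
            rw [lintegral_const, hν, Measure.restrict_apply_univ]
    calc ∫⁻ u, ν (Prod.mk u ⁻¹' Wθ) ∂ν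
        ≤ ∫⁻ u, (ENNReal.ofReal sdq + ν {y | κ ≤ (inner ℝ (m y) u : ℝ)}) ∂ν := step1
      _ = ENNReal.ofReal sdq * μ A + ∫⁻ u, ν {y | κ ≤ (inner ℝ (m y) u : ℝ)} ∂ν := step2
      _ ≤ ENNReal.ofReal sdq * μ A + ENNReal.ofReal sdq * μ A := add_le_add_right step3 _
      _ = 2 * ENNReal.ofReal sdq * μ A := by ring
  -- convert to the real-valued integral
  have hInt_eq : ∫ u, (μ ({y ∈ S | (inner ℝ u y : ℝ) ≥ Real.cos θ} ∩ A)).toReal ∂ν =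
      (∫⁻ u, ν (Prod.mk u ⁻¹' Wθ) ∂ν).toReal := by
    have heq : (fun u => (μ ({y ∈ S | (inner ℝ u y : ℝ) ≥ Real.cos θ} ∩ A)).toReal) =
        fun u => (ν (Prod.mk u ⁻¹' Wθ)).toReal :=
      funext fun u => congrArg ENNReal.toReal (hf_eq u)
    rw [heq]
    exact integral_toReal hf_meas.aemeasurable (ae_of_all _ fun u =>
      lt_of_le_of_lt (measure_mono (Set.subset_univ _)) (measure_lt_top ν Set.univ))
  rw [hInt_eq]
  have ht0 : 0 < (μ A).toReal := ENNReal.toReal_pos hApos.ne' hμAtop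
  have hrhs : (2 * ENNReal.ofReal sdq * μ A).toReal = 2 * sdq * (μ A).toReal := by
    rw [ENNReal.toReal_mul, ENNReal.toReal_mul, ENNReal.toReal_ofReal hsdq]
    norm_num
  have hIle : (∫⁻ u, ν (Prod.mk u ⁻¹' Wθ) ∂ν).toReal ≤ 2 * sdq * (μ A).toReal := by
    rw [← hrhs]
    refine ENNReal.toReal_mono ?_ hL
    exact ENNReal.mul_ne_top (ENNReal.mul_ne_top (by simp) ENNReal.ofReal_ne_top) hμAtop
  calc (1 / (μ A).toReal) * (∫⁻ u, ν (Prod.mk u ⁻¹' Wθ) ∂ν).toReal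
      ≤ (1 / (μ A).toReal) * (2 * sdq * (μ A).toReal) :=
        mul_le_mul_of_nonneg_left hIle (by positivity)
    _ = 2 * sdq := by field_simp
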